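/- Let g' ≥ 2 be an integer, r a positive integer and d' an integer with gcd(r,d') = 1. Define F(t) = (1−t) · P^{ℍ,od}_{g'}(r,d')(t) for real t > 0 with t ≠ 1. Then for all such t one has t^{r²(2g'−2)+1} · F(1/t) = F(t). -/

import Mathlib

open Finset

noncomputable section

/-- `ang x` is `⟨x⟩ = ⌊x⌋ + 1 - x`, the unique element of `(0,1]` with `x + ⟨x⟩ ∈ ℤ`. -/
def ang (x : ℝ) : ℝ := (⌊x⌋ : ℝ) + 1 - x

/-- `M(r₁,…,r_l; λ) = Σ_{i=1}^{l-1} (r_i + r_{i+1}) · ⟨(r₁+⋯+r_i)·λ⟩` for `L = [r₁,…,r_l]`. -/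
def Mfun (L : List ℕ) (lam : ℝ) : ℝ :=
  ∑ i ∈ Finset.range (L.length - 1),
    ((L.getD i 0 : ℝ) + (L.getD (i+1) 0 : ℝ)) * ang (((L.take (i+1)).sum : ℝ) * lam)

/-- `∏_{i=1}^{l-1} (1 - x^{m·(r_i + r_{i+1})})`. -/
def adjProd (x : ℝ) (m : ℕ) (L : List ℕ) : ℝ :=
  ∏ i ∈ Finset.range (L.length - 1), (1 - x ^ (m * (L.getD i 0 + L.getD (i+1) 0)))

/-- `Σ_{1 ≤ i < j ≤ l} r_i r_j`. -/
def pairSum (L : List ℕ) : ℝ :=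
  ∑ i ∈ Finset.range L.length, ∑ j ∈ Finset.Ico (i+1) L.length,
    (L.getD i 0 : ℝ) * (L.getD j 0 : ℝ)

/-- The block factor `∏_{j=1}^{rᵢ}(1+t^{2j-1})^{2g'} / (∏_{j=1}^{rᵢ-1}(1-t^{2j}) ∏_{j=1}^{rᵢ}(1-t^{2j}))`. -/
def blockHod (g' : ℕ) (t : ℝ) (ri : ℕ) : ℝ :=
  (∏ j ∈ Finset.range ri, (1 + t ^ (2*j+1)) ^ (2*g')) /
  ((∏ j ∈ Finset.range (ri - 1), (1 - t ^ (2*j+2))) * ∏ j ∈ Finset.range ri, (1 - t ^ (2*j+2)))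

/-- The closed formula `P^{ℍ,od}_{g'}(r,d)(t)` (quaternionic, odd genus `2g'-1`, no real points). -/
def PHod (g' r : ℕ) (d : ℤ) (t : ℝ) : ℝ :=
  ∑ c : Composition r,
    (-1 : ℝ) ^ (c.length - 1) *
    (t ^ (2 * Mfun c.blocks ((d : ℝ) / (r : ℝ))) / adjProd t 2 c.blocks) *
    t ^ ((2 * (g' : ℝ) - 2) * pairSum c.blocks) *
    (c.blocks.map (blockHod g' t)).prod

/-! ### Auxiliary lemmas -/

lemma sum_odd_sq (n : ℕ) : ∑ j ∈ range n, (2*j+1) = n^2 := by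
  induction n with
  | zero => simp
  | succ k ih => rw [Finset.sum_range_succ, ih]; ring

lemma sum_even_sq (n : ℕ) : ∑ j ∈ range n, (2*j+2) = n^2 + n := by
  induction n with
  | zero => simp
  | succ k ih => rw [Finset.sum_range_succ, ih]; ring

lemma pow_ne_one_aux {t : ℝ} (ht : 0 < t) (ht1 : t ≠ 1) {n : ℕ} (hn : 0 < n) : t ^ n ≠ 1 := by
  rcases lt_or_gt_of_ne ht1 with h | h
  · exact ne_of_lt (pow_lt_one₀ ht.le h hn.ne')
  · exact ne_of_gt (one_lt_pow₀ h hn.ne')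

lemma inv_pow_mul_pow {t : ℝ} (ht : t ≠ 0) (k : ℕ) : (1/t)^k * t^k = 1 := by
  rw [← mul_pow, one_div, inv_mul_cancel₀ ht, one_pow]

lemma one_sub_inv_pow {t : ℝ} (ht : t ≠ 0) (k : ℕ) :
    1 - (1/t)^k = -((1/t)^k) * (1 - t^k) := by
  linear_combination - inv_pow_mul_pow ht k

lemma one_add_inv_pow {t : ℝ} (ht : t ≠ 0) (k : ℕ) :
    1 + (1/t)^k = (1/t)^k * (1 + t^k) := by
  linear_combination - inv_pow_mul_pow ht k

lemma prod_one_add_inv {t : ℝ} (ht : t ≠ 0) (n : ℕ) :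
    ∏ j ∈ range n, (1 + (1/t)^(2*j+1)) = (1/t)^(n^2) * ∏ j ∈ range n, (1 + t^(2*j+1)) := by
  calc ∏ j ∈ range n, (1 + (1/t)^(2*j+1))
      = ∏ j ∈ range n, ((1/t)^(2*j+1) * (1 + t^(2*j+1))) :=
        Finset.prod_congr rfl (fun j _ => one_add_inv_pow ht _)
    _ = (∏ j ∈ range n, (1/t)^(2*j+1)) * ∏ j ∈ range n, (1 + t^(2*j+1)) :=
        Finset.prod_mul_distrib
    _ = (1/t)^(n^2) * ∏ j ∈ range n, (1 + t^(2*j+1)) := by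
        rw [Finset.prod_pow_eq_pow_sum, sum_odd_sq]

lemma prod_one_sub_inv {t : ℝ} (ht : t ≠ 0) (n : ℕ) :
    ∏ j ∈ range n, (1 - (1/t)^(2*j+2)) =
      (-1)^n * (1/t)^(n^2+n) * ∏ j ∈ range n, (1 - t^(2*j+2)) := by
  calc ∏ j ∈ range n, (1 - (1/t)^(2*j+2))
      = ∏ j ∈ range n, ((-1) * ((1/t)^(2*j+2) * (1 - t^(2*j+2)))) :=
        Finset.prod_congr rfl (fun j _ => by rw [one_sub_inv_pow ht]; ring)
    _ = (-1)^n * ((∏ j ∈ range n, (1/t)^(2*j+2)) * ∏ j ∈ range n, (1 - t^(2*j+2))) := by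
        rw [Finset.prod_mul_distrib, Finset.prod_mul_distrib, Finset.prod_const,
          Finset.card_range]
    _ = (-1)^n * (1/t)^(n^2+n) * ∏ j ∈ range n, (1 - t^(2*j+2)) := by
        rw [Finset.prod_pow_eq_pow_sum, sum_even_sq]; ring

lemma blockHod_inv {t : ℝ} (ht : t ≠ 0) (g' : ℕ) (hg : 1 ≤ g') {n : ℕ} (hn : 0 < n) :
    blockHod g' (1/t) n = -((1/t)^((2*g'-2)*n^2)) * blockHod g' t n := by
  obtain ⟨k, rfl⟩ : ∃ k, n = k + 1 := ⟨n - 1, by omega⟩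
  have hu : (1/t) ≠ 0 := one_div_ne_zero ht
  unfold blockHod
  rw [Finset.prod_pow, Finset.prod_pow, prod_one_add_inv ht, prod_one_sub_inv ht,
    prod_one_sub_inv ht]
  simp only [Nat.add_sub_cancel]
  rw [mul_pow, ← pow_mul]
  rw [show ((-1:ℝ))^k * (1/t)^(k^2+k) * (∏ j ∈ range k, (1 - t^(2*j+2))) *
        ((-1)^(k+1) * (1/t)^((k+1)^2+(k+1)) * ∏ j ∈ range (k+1), (1 - t^(2*j+2)))
      = ((-1)^(2*k+1) * (1/t)^(k^2+k+((k+1)^2+(k+1)))) *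
        ((∏ j ∈ range k, (1 - t^(2*j+2))) * ∏ j ∈ range (k+1), (1 - t^(2*j+2))) by
      rw [pow_add ((-1:ℝ)), pow_add, two_mul, pow_add]; ring]
  rw [mul_div_mul_comm]
  congr 1
  have e1 : (k+1)^2*(2*g') = (2*g'-2)*(k+1)^2 + (k^2+k+((k+1)^2+(k+1))) := by
    have h3 : k^2+k+((k+1)^2+(k+1)) = 2*((k+1)^2) := by ring
    have h4 : (k+1)^2*(2*g') = 2*g'*((k+1)^2) := by ring
    have h2 : 2*((k+1)^2) ≤ 2*g'*((k+1)^2) := Nat.mul_le_mul_right _ (by omega)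
    rw [h3, h4, Nat.sub_mul, Nat.sub_add_cancel h2]
  rw [e1, pow_add, pow_succ]
  field_simp
  ring_nf
  rw [pow_mul', neg_one_sq, one_pow]

lemma map_blockHod_inv {t : ℝ} (ht : t ≠ 0) (g' : ℕ) (hg : 1 ≤ g') (L : List ℕ)
    (hL : ∀ x ∈ L, 0 < x) :
    (L.map (blockHod g' (1/t))).prod =
      (-1)^L.length * (1/t)^((2*g'-2) * (L.map (fun n => n^2)).sum) *
        (L.map (blockHod g' t)).prod := by
  induction L with
  | nil => simp
  | cons a L ih =>
    have ha : 0 < a := hL a List.mem_cons_self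
    have ihh := ih (fun x hx => hL x (List.mem_cons_of_mem a hx))
    simp only [List.map_cons, List.prod_cons, List.length_cons, List.sum_cons, ihh,
      blockHod_inv ht g' hg ha]
    rw [Nat.mul_add, pow_add, pow_succ]
    ring

lemma adjProd_inv {t : ℝ} (ht : t ≠ 0) (m : ℕ) (L : List ℕ) :
    adjProd (1/t) m L =
      (-1)^(L.length - 1) *
      (1/t)^(m * ∑ i ∈ range (L.length - 1), (L.getD i 0 + L.getD (i+1) 0)) *
      adjProd t m L := by
  unfold adjProd
  calc ∏ i ∈ range (L.length - 1), (1 - (1/t) ^ (m * (L.getD i 0 + L.getD (i+1) 0)))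
      = ∏ i ∈ range (L.length - 1),
          ((-1) * ((1/t) ^ (m * (L.getD i 0 + L.getD (i+1) 0)) *
            (1 - t ^ (m * (L.getD i 0 + L.getD (i+1) 0))))) :=
        Finset.prod_congr rfl (fun i _ => by rw [one_sub_inv_pow ht]; ring)
    _ = _ := by
        rw [Finset.prod_mul_distrib, Finset.prod_mul_distrib, Finset.prod_const,
          Finset.card_range, Finset.prod_pow_eq_pow_sum, ← Finset.mul_sum]
        ring

lemma sum_getD_cast (L : List ℕ) :
    ∑ i ∈ range L.length, ((L.getD i 0 : ℝ)) = (L.sum : ℝ) := by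
  induction L with
  | nil => simp
  | cons a L ih =>
    rw [List.length_cons, Finset.sum_range_succ']
    simp only [List.getD_cons_succ, List.getD_cons_zero, List.sum_cons, ih]
    push_cast; ring

lemma pairSum_cons (a : ℕ) (L : List ℕ) :
    pairSum (a :: L) = (a : ℝ) * (L.sum : ℝ) + pairSum L := by
  unfold pairSum
  rw [List.length_cons, Finset.sum_range_succ']
  have h1 : ∀ i ∈ range L.length,
      (∑ j ∈ Finset.Ico (i+1+1) (L.length+1), (((a::L).getD (i+1) 0 : ℝ) * ((a::L).getD j 0 : ℝ)))
        = ∑ j ∈ Finset.Ico (i+1) L.length, ((L.getD i 0 : ℝ) * (L.getD j 0 : ℝ)) := by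
    intro i _
    rw [Finset.sum_Ico_eq_sum_range, Finset.sum_Ico_eq_sum_range]
    have hlen : L.length + 1 - (i + 1 + 1) = L.length - (i + 1) := by omega
    rw [hlen]
    refine Finset.sum_congr rfl (fun k _ => ?_)
    have e2 : (a::L).getD (i+1+1+k) 0 = L.getD (i+1+k) 0 := by
      have : i+1+1+k = (i+1+k)+1 := by omega
      rw [this, List.getD_cons_succ]
    rw [List.getD_cons_succ, e2]
  have h2 : (∑ j ∈ Finset.Ico (0+1) (L.length+1), (((a::L).getD 0 0 : ℝ) * ((a::L).getD j 0 : ℝ)))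
      = (a : ℝ) * (L.sum : ℝ) := by
    rw [Finset.sum_Ico_eq_sum_range]
    simp only [Nat.add_sub_cancel, List.getD_cons_zero]
    rw [← Finset.mul_sum, ← sum_getD_cast L]
    congr 1
    refine Finset.sum_congr rfl (fun k _ => ?_)
    have : 1 + k = k + 1 := by omega
    rw [this, List.getD_cons_succ]
  rw [Finset.sum_congr rfl h1, h2, add_comm]

lemma pairSum_sq (L : List ℕ) :
    2 * pairSum L + (((L.map (fun n => n^2)).sum : ℕ) : ℝ) = ((L.sum : ℕ) : ℝ)^2 := by
  induction L with
  | nil => simp [pairSum]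
  | cons a L ih =>
    rw [pairSum_cons]
    simp only [List.map_cons, List.sum_cons]
    push_cast
    push_cast at ih
    nlinarith [ih]

lemma getD_reverse' (L : List ℕ) {i : ℕ} (h : i < L.length) :
    L.reverse.getD i 0 = L.getD (L.length - 1 - i) 0 := by
  rw [List.getD_eq_getElem?_getD, List.getD_eq_getElem?_getD, List.getElem?_reverse h]

lemma adjProd_reverse (x : ℝ) (m : ℕ) (L : List ℕ) :
    adjProd x m L.reverse = adjProd x m L := by
  unfold adjProd
  rw [List.length_reverse, ← Finset.prod_range_reflect]
  refine Finset.prod_congr rfl (fun i hi => ?_)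
  rw [Finset.mem_range] at hi
  have h1 : L.length - 1 - 1 - i < L.length := by omega
  have h2 : L.length - 1 - 1 - i + 1 < L.length := by omega
  rw [getD_reverse' L h1, getD_reverse' L h2]
  have e1 : L.length - 1 - (L.length - 1 - 1 - i) = i + 1 := by omega
  have e2 : L.length - 1 - (L.length - 1 - 1 - i + 1) = i := by omega
  rw [e1, e2, Nat.add_comm (L.getD (i+1) 0)]

lemma pairSum_reverse (L : List ℕ) : pairSum L.reverse = pairSum L := by
  have h1 := pairSum_sq L.reverse
  have h2 := pairSum_sq L
  rw [List.sum_reverse, List.map_reverse, List.sum_reverse] at h1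
  linarith

lemma take_reverse_sum' (L : List ℕ) {n : ℕ} (h : n ≤ L.length) :
    (L.reverse.take n).sum = L.sum - (L.take (L.length - n)).sum := by
  have h1 : L.reverse = (L.drop (L.length - n)).reverse ++ (L.take (L.length - n)).reverse := by
    rw [← List.reverse_append, List.take_append_drop]
  have h2 : (L.drop (L.length - n)).reverse.length = n := by
    simp [List.length_drop]; omega
  rw [h1, List.take_left' h2, List.sum_reverse]
  have := List.sum_take_add_sum_drop L (L.length - n)
  omega

lemma ang_eq_fract (x : ℝ) : ang x = 1 - Int.fract x := by
  unfold ang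
  rw [← Int.self_sub_floor]
  ring

lemma ang_add_int (x : ℝ) (n : ℤ) : ang (x + n) = ang x := by
  simp [ang, Int.floor_add_intCast]; ring

lemma ang_neg {x : ℝ} (h : Int.fract x ≠ 0) : ang (-x) = 1 - ang x := by
  rw [ang_eq_fract, ang_eq_fract, Int.fract_neg h]

lemma fract_ne_zero_of_coprime {r : ℕ} {s : ℕ} (hs0 : 0 < s) (hsr : s < r)
    {d : ℤ} (hcop : Int.gcd (r : ℤ) d = 1) :
    Int.fract ((s : ℝ) * ((d : ℝ) / (r : ℝ))) ≠ 0 := by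
  intro h
  have hr0 : (0:ℝ) < (r:ℝ) := by exact_mod_cast hs0.trans hsr
  rw [Int.fract_eq_iff] at h
  obtain ⟨-, -, z, hz⟩ := h
  rw [sub_zero] at hz
  have hz' : (s : ℝ) * (d : ℝ) = (z : ℝ) * (r : ℝ) := by
    field_simp at hz
    linarith [hz]
  have hz'' : (s : ℤ) * d = z * (r : ℤ) := by exact_mod_cast hz'
  have hdvd : (r : ℤ) ∣ (s : ℤ) * d := ⟨z, by linarith [hz'']⟩
  have hco : IsCoprime (r : ℤ) d := Int.isCoprime_iff_gcd_eq_one.mpr hcop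
  have hdvd' : (r : ℤ) ∣ (s : ℤ) := hco.dvd_of_dvd_mul_right hdvd
  have : (r : ℤ) ≤ (s : ℤ) := Int.le_of_dvd (by exact_mod_cast hs0) hdvd'
  omega

lemma Mfun_reverse (L : List ℕ) (hL : ∀ x ∈ L, 0 < x) {r : ℕ} (hsum : L.sum = r) (hr : 0 < r)
    {d : ℤ} (hcop : Int.gcd (r : ℤ) d = 1) :
    Mfun L.reverse ((d : ℝ) / (r : ℝ)) =
      (∑ i ∈ range (L.length - 1), ((L.getD i 0 : ℝ) + (L.getD (i+1) 0 : ℝ)))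
        - Mfun L ((d : ℝ) / (r : ℝ)) := by
  unfold Mfun
  rw [List.length_reverse, ← Finset.sum_range_reflect, ← Finset.sum_sub_distrib]
  refine Finset.sum_congr rfl (fun i hi => ?_)
  rw [Finset.mem_range] at hi
  have hl2 : 2 ≤ L.length := by omega
  have hidx : L.length - 1 - 1 - i = L.length - 2 - i := by omega
  rw [hidx]
  have h1 : L.length - 2 - i < L.length := by omega
  have h2 : L.length - 2 - i + 1 < L.length := by omega
  rw [getD_reverse' L h1, getD_reverse' L h2]
  have e1 : L.length - 1 - (L.length - 2 - i) = i + 1 := by omega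
  have e2 : L.length - 1 - (L.length - 2 - i + 1) = i := by omega
  rw [e1, e2]
  have h3 : L.length - 2 - i + 1 ≤ L.length := by omega
  rw [take_reverse_sum' L h3]
  have e3 : L.length - (L.length - 2 - i + 1) = i + 1 := by omega
  rw [e3, hsum]
  set s : ℕ := (L.take (i+1)).sum with hs
  have hsle : s ≤ r := by
    rw [← hsum]
    calc s ≤ (L.take (i+1)).sum + (L.drop (i+1)).sum := Nat.le_add_right _ _
    _ = L.sum := List.sum_take_add_sum_drop L (i+1)
  have hs0 : 0 < s := by
    have : L.take (i+1) ≠ [] := by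
      intro hnil
      have hlen := congrArg List.length hnil
      rw [List.length_take] at hlen
      simp only [List.length_nil] at hlen
      omega
    rcases List.exists_mem_of_ne_nil _ this with ⟨x, hx⟩
    have hx' : 0 < x := hL x (List.take_subset _ _ hx)
    calc 0 < x := hx'
    _ ≤ s := List.single_le_sum (fun y _ => Nat.zero_le y) x hx
  have hssr : s < r := by
    have hdropne : L.drop (i+1) ≠ [] := by
      intro hnil
      have hlen := congrArg List.length hnil
      rw [List.length_drop] at hlen
      simp only [List.length_nil] at hlen
      omega
    rcases List.exists_mem_of_ne_nil _ hdropne with ⟨x, hx⟩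
    have hx' : 0 < x := hL x (List.drop_subset _ _ hx)
    have hds : 0 < (L.drop (i+1)).sum :=
      lt_of_lt_of_le hx' (List.single_le_sum (fun y _ => Nat.zero_le y) x hx)
    have key := List.sum_take_add_sum_drop L (i+1)
    rw [← hs] at key
    omega
  have hrne : (r : ℝ) ≠ 0 := by positivity
  have hcast : ((r - s : ℕ) : ℝ) = (r : ℝ) - (s : ℝ) := by
    exact Nat.cast_sub hsle
  rw [hcast]
  have harg : ((r : ℝ) - s) * ((d : ℝ) / (r : ℝ)) = -((s : ℝ) * ((d : ℝ)/(r : ℝ))) + (d : ℤ) := by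
    field_simp
    ring
  rw [harg, ang_add_int, ang_neg (fract_ne_zero_of_coprime hs0 hssr hcop)]
  ring

lemma adjProd_ne_zero {t : ℝ} (ht : 0 < t) (ht1 : t ≠ 1) (L : List ℕ)
    (hL : ∀ x ∈ L, 0 < x) : adjProd t 2 L ≠ 0 := by
  unfold adjProd
  rw [Finset.prod_ne_zero_iff]
  intro i hi
  rw [Finset.mem_range] at hi
  have hpos : 0 < L.getD i 0 := by
    have hmem : L.getD i 0 ∈ L := by
      rw [List.getD_eq_getElem L 0 (by omega)]
      exact List.getElem_mem _
    exact hL _ hmem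
  have : t ^ (2 * (L.getD i 0 + L.getD (i+1) 0)) ≠ 1 :=
    pow_ne_one_aux ht ht1 (by omega)
  intro hzero
  apply this
  linarith [sub_eq_zero.mp hzero]

/-- Reversal of a composition. -/
def Composition.rev {r : ℕ} (c : Composition r) : Composition r :=
  ⟨c.blocks.reverse, fun hi => c.blocks_pos (List.mem_reverse.mp hi),
    by rw [List.sum_reverse]; exact c.blocks_sum⟩

lemma Composition.rev_involutive (r : ℕ) :
    Function.Involutive (Composition.rev (r := r)) := by
  intro c
  cases c
  simp [Composition.rev]

/-! ### The key term-by-term identity -/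

lemma key_term (g' r : ℕ) (hg : 2 ≤ g') (hr : 0 < r) (d' : ℤ)
    (hcop : Int.gcd (r : ℤ) d' = 1) (t : ℝ) (ht : 0 < t) (ht1 : t ≠ 1)
    (L : List ℕ) (hL : ∀ x ∈ L, 0 < x) (hsum : L.sum = r) :
    t ^ ((r : ℝ)^2 * (2 * (g' : ℝ) - 2) + 1) * ((1 - 1/t) *
      ((-1 : ℝ) ^ (L.length - 1) *
        ((1/t) ^ (2 * Mfun L ((d' : ℝ) / (r : ℝ))) / adjProd (1/t) 2 L) *
        (1/t) ^ ((2 * (g' : ℝ) - 2) * pairSum L) *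
        (L.map (blockHod g' (1/t))).prod))
    = (1 - t) *
      ((-1 : ℝ) ^ (L.reverse.length - 1) *
        (t ^ (2 * Mfun L.reverse ((d' : ℝ) / (r : ℝ))) / adjProd t 2 L.reverse) *
        t ^ ((2 * (g' : ℝ) - 2) * pairSum L.reverse) *
        (L.reverse.map (blockHod g' t)).prod) := by
  have htne : t ≠ 0 := ht.ne'
  have hlpos : 0 < L.length := by
    rcases L with - | ⟨a, L⟩
    · simp at hsum; omega
    · simp
  have hgcast : ((2*g'-2 : ℕ) : ℝ) = 2*(g' : ℝ) - 2 := by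
    rw [Nat.cast_sub (by omega : (2:ℕ) ≤ 2*g')]
    push_cast; ring
  have hSne : adjProd t 2 L ≠ 0 := adjProd_ne_zero ht ht1 L hL
  -- rewrite the right-hand side
  rw [List.length_reverse, adjProd_reverse, pairSum_reverse, List.map_reverse,
    List.prod_reverse, Mfun_reverse L hL hsum hr hcop]
  -- rewrite the left-hand side structure
  rw [adjProd_inv htne 2 L, map_blockHod_inv htne g' (by omega) L hL]
  -- convert 1/t powers
  have h0 : (1 : ℝ) - 1/t = -(1/t) * (1 - t) := by
    field_simp
    ring
  have h1 : (1/t : ℝ) ^ (2 * Mfun L ((d' : ℝ) / (r : ℝ)))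
      = (t ^ (2 * Mfun L ((d' : ℝ) / (r : ℝ))))⁻¹ := by
    rw [one_div, Real.inv_rpow ht.le]
  have h2 : (1/t : ℝ) ^ ((2 * (g' : ℝ) - 2) * pairSum L)
      = (t ^ ((2 * (g' : ℝ) - 2) * pairSum L))⁻¹ := by
    rw [one_div, Real.inv_rpow ht.le]
  have h3 : (1/t : ℝ) ^ (2 * ∑ i ∈ range (L.length - 1), (L.getD i 0 + L.getD (i+1) 0))
      = (t ^ (2 * ∑ i ∈ range (L.length - 1), (L.getD i 0 + L.getD (i+1) 0)))⁻¹ := by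
    rw [one_div, inv_pow]
  have h4 : (1/t : ℝ) ^ ((2*g'-2) * (L.map (fun n => n^2)).sum)
      = (t ^ ((2*g'-2) * (L.map (fun n => n^2)).sum))⁻¹ := by
    rw [one_div, inv_pow]
  have h5 : t ^ ((r : ℝ)^2 * (2 * (g' : ℝ) - 2) + 1) = t ^ ((2*g'-2) * r^2) * t := by
    rw [show t ^ ((2*g'-2) * r^2) * t = t ^ ((2*g'-2) * r^2 + 1) from (pow_succ t _).symm,
      ← Real.rpow_natCast t ((2*g'-2) * r^2 + 1)]
    congr 1
    rw [Nat.cast_add, Nat.cast_mul, hgcast, Nat.cast_pow, Nat.cast_one]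
    ring
  have h6 : t ^ (2 * ((∑ i ∈ range (L.length - 1), ((L.getD i 0 : ℝ) + (L.getD (i+1) 0 : ℝ)))
        - Mfun L ((d' : ℝ) / (r : ℝ))))
      = t ^ (2 * ∑ i ∈ range (L.length - 1), (L.getD i 0 + L.getD (i+1) 0)) *
        (t ^ (2 * Mfun L ((d' : ℝ) / (r : ℝ))))⁻¹ := by
    rw [← Real.rpow_natCast t (2 * ∑ i ∈ range (L.length - 1), (L.getD i 0 + L.getD (i+1) 0)),
      ← Real.rpow_neg ht.le, ← Real.rpow_add ht]
    congr 1
    push_cast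
    ring
  have h7 : t ^ ((2 * (g' : ℝ) - 2) * pairSum L) * t ^ ((2 * (g' : ℝ) - 2) * pairSum L) *
      (t ^ ((2*g'-2) * (L.map (fun n => n^2)).sum)) = t ^ ((2*g'-2) * r^2) := by
    rw [← Real.rpow_natCast t ((2*g'-2) * (L.map (fun n => n^2)).sum),
      ← Real.rpow_natCast t ((2*g'-2) * r^2),
      ← Real.rpow_add ht, ← Real.rpow_add ht]
    congr 1
    have hps := pairSum_sq L
    rw [hsum] at hps
    rw [Nat.cast_mul, Nat.cast_mul, hgcast, Nat.cast_pow]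
    linear_combination (2*(g' : ℝ) - 2) * hps
  rw [h0, h1, h2, h3, h4, h5, h6, ← h7]
  -- signs
  have hsign : ((-1 : ℝ)) ^ L.length = (-1 : ℝ) ^ (L.length - 1) * (-1) := by
    rw [← pow_succ]
    congr 1
    omega
  rw [hsign]
  have hane : (t : ℝ) ^ (2 * ∑ i ∈ range (L.length - 1), (L.getD i 0 + L.getD (i+1) 0)) ≠ 0 :=
    pow_ne_zero _ htne
  have hbne : (t : ℝ) ^ (2 * Mfun L ((d' : ℝ) / (r : ℝ))) ≠ 0 :=
    (Real.rpow_pos_of_pos ht _).ne'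
  have hcne : (t : ℝ) ^ ((2 * (g' : ℝ) - 2) * pairSum L) ≠ 0 :=
    (Real.rpow_pos_of_pos ht _).ne'
  have hdne : (t : ℝ) ^ ((2*g'-2) * (L.map (fun n => n^2)).sum) ≠ 0 := pow_ne_zero _ htne
  rcases Nat.even_or_odd (L.length - 1) with he | ho
  · rw [he.neg_one_pow]
    field_simp
  · rw [ho.neg_one_pow]
    field_simp

/-- Strange Poincaré duality for `(1-t)·P^{ℍ,od}_{g'}(r,d')`
(Theorem `strange_Poincare_duality_no_real_points` (3)). -/
theorem stmt6 (g' r : ℕ) (hg : 2 ≤ g') (hr : 0 < r)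
    (d' : ℤ) (hcop : Int.gcd (r : ℤ) d' = 1)
    (t : ℝ) (ht : 0 < t) (ht1 : t ≠ 1) :
    t ^ ((r : ℝ)^2 * (2 * (g' : ℝ) - 2) + 1) * ((1 - 1/t) * PHod g' r d' (1/t)) =
      (1 - t) * PHod g' r d' t := by
  unfold PHod
  rw [Finset.mul_sum, Finset.mul_sum, Finset.mul_sum]
  refine Fintype.sum_equiv ((Composition.rev_involutive r).toPerm) _ _ (fun c => ?_)
  exact key_term g' r hg hr d' hcop t ht ht1 c.blocks
    (fun x hx => c.blocks_pos hx) c.blocks_sum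

end
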